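/- Fix n ≥ 2 and 0 < p < 1. Let f : ℤ → ℝ be f(−1) = p, f(0) = 1 − p, f(m) = 0 otherwise. Define on W_n the kernel P_n(x,y) = (Δ_n(y)/Δ_n(x)) det(f(x_i − y_j))_{i,j=1}^n, similarly P_{n−1} on W_{n−1}, and define the link Λⁿ_{n−1}(x, y) = (n−1)! (Δ_{n−1}(y)/Δ_n(x)) 1_{[y ≺ x]} from W_n to W_{n−1}. Then the intertwining relation P_n Λⁿ_{n−1} = Λⁿ_{n−1} P_{n−1} holds: for all x ∈ W_n and z ∈ W_{n−1}, ∑_{y ∈ W_n} P_n(x,y) Λⁿ_{n−1}(y,z) = ∑_{w ∈ W_{n−1}} Λⁿ_{n−1}(x,w) P_{n−1}(w,z) (both sums are finite). -/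

import Mathlib

open scoped Classical

/-- The Vandermonde determinant `Δ_n(x) = ∏_{1 ≤ i < j ≤ n} (x_j - x_i)` of an integer vector. -/
def vandermondeProd {n : ℕ} (x : Fin n → ℤ) : ℤ :=
  ∏ p ∈ Finset.univ.filter (fun p : Fin n × Fin n => p.1 < p.2), (x p.2 - x p.1)

/-- `y` (one level down, `m` entries) interlaces with `x` (`m+1` entries):
`x_k < y_k ≤ x_{k+1}` for all `k`. -/
def Interlace {m : ℕ} (y : Fin m → ℤ) (x : Fin (m + 1) → ℤ) : Prop :=
  ∀ i : Fin m, x i.castSucc < y i ∧ y i ≤ x i.succ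

/-- One-step transition weight of a single Bernoulli(p) walker: `f(-1) = p`, `f(0) = 1 - p`,
and `f(m) = 0` otherwise. -/
def bern (p : ℝ) : ℤ → ℝ := fun m => if m = -1 then p else if m = 0 then 1 - p else 0

/-- One-step transition probability of the discrete-time Charlier process with `n` walkers:
`P_n(x,y) = (Δ_n(y)/Δ_n(x)) · det(f(x_i - y_j))_{i,j=1}^n`. -/
noncomputable def charlierP (p : ℝ) {n : ℕ} (x y : Fin n → ℤ) : ℝ :=
  ((vandermondeProd y : ℝ) / (vandermondeProd x : ℝ)) *
    (Matrix.of fun i j : Fin n => bern p (x i - y j)).det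

/-- The Markov link `Λⁿ_{n-1}(x, y) = (n-1)! Δ_{n-1}(y)/Δ_n(x) · 1_{[y ≺ x]}`
(here `n = m + 1`). -/
noncomputable def linkKernel {m : ℕ} (x : Fin (m + 1) → ℤ) (y : Fin m → ℤ) : ℝ :=
  (m.factorial : ℝ) * ((vandermondeProd y : ℝ) / (vandermondeProd x : ℝ)) *
    (if Interlace y x then 1 else 0)

/-! ### Auxiliary definitions for the proof -/

/-- Integer 0/1 value of a Boolean. -/
def bi (b : Bool) : ℤ := if b then 1 else 0

/-- Bernoulli weight of a Boolean step. -/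
def bq (p : ℝ) (b : Bool) : ℝ := if b then p else 1 - p

/-- Probability that a walker at distance `d` below a level stays strictly below it. -/
def Af (p : ℝ) (d : ℤ) : ℝ := if 2 ≤ d then 1 else if d = 1 then 1 - p else 0

/-- Probability that a walker stays weakly above. -/
def Bf (p : ℝ) (e : ℤ) : ℝ := if e ≤ 0 then 1 else if e = 1 then p else 0

lemma vdm_pos {n : ℕ} {y : Fin n → ℤ} (hy : StrictMono y) : 0 < vandermondeProd y := by
  refine Finset.prod_pos ?_
  intro q hq
  simp only [Finset.mem_filter] at hq
  have := hy hq.2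
  omega

lemma bern_ne_zero {p : ℝ} {t : ℤ} (h : bern p t ≠ 0) : t = -1 ∨ t = 0 := by
  by_contra hc
  push_neg at hc
  simp [bern, hc.1, hc.2] at h

/-- For strictly increasing integer vectors, the Bernoulli-kernel determinant reduces to the
product of its diagonal entries. -/
lemma det_bern (p : ℝ) {n : ℕ} {x y : Fin n → ℤ} (hx : StrictMono x) (hy : StrictMono y) :
    (Matrix.of fun i j : Fin n => bern p (x i - y j)).det = ∏ i, bern p (x i - y i) := by
  rw [Matrix.det_apply]
  rw [Finset.sum_eq_single (1 : Equiv.Perm (Fin n))]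
  · simp
  · intro σ _ hσ
    by_contra hne
    have hterm : ∏ i, (Matrix.of fun i j : Fin n => bern p (x i - y j)) (σ i) i ≠ 0 := by
      intro h0
      rw [h0] at hne; simp at hne
    rw [Finset.prod_ne_zero_iff] at hterm
    have hbox : ∀ i : Fin n, x (σ i) ≤ y i ∧ y i ≤ x (σ i) + 1 := by
      intro i
      have := hterm i (Finset.mem_univ i)
      simp only [Matrix.of_apply] at this
      rcases bern_ne_zero this with h | h <;> omega
    have hmono : StrictMono fun i => σ i := by
      intro i j hij
      by_contra hc
      push_neg at hc
      have hne2 : σ j ≠ σ i := fun h => absurd (σ.injective h) (by omega)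
      have hlt : σ j < σ i := lt_of_le_of_ne hc hne2
      have h1 := hbox i
      have h2 := hbox j
      have hxx : x (σ j) < x (σ i) := hx hlt
      have hyy : y i < y j := hy hij
      omega
    have : (fun i => σ i) = (id : Fin n → Fin n) := by
      haveI : WellFoundedLT (Fin n) := inferInstance
      refine (StrictMono.range_inj (β := Fin n) (γ := Fin n) hmono
        (strictMono_id (α := Fin n))).1 ?_
      simp [Set.range_id, Set.range_eq_univ.2 σ.surjective]
    exact hσ (Equiv.Perm.ext fun i => congrFun this i)
  · simp

/-! ### Single-site computations -/

lemma site_lo (p : ℝ) (u z₁ : ℤ) :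
    (∑ b : Bool, bq p b * (if u + bi b < z₁ then (1:ℝ) else 0)) = Af p (z₁ - u) := by
  simp only [Fintype.sum_bool, bq, bi, Af]
  norm_num
  split_ifs <;> first | ring1 | (exfalso; omega)

lemma site_hi (p : ℝ) (u z₀ : ℤ) :
    (∑ b : Bool, bq p b * (if z₀ ≤ u + bi b then (1:ℝ) else 0)) = Bf p (z₀ - u) := by
  simp only [Fintype.sum_bool, bq, bi, Bf]
  norm_num
  split_ifs <;> first | ring1 | (exfalso; omega)

lemma site_mid (p : ℝ) (u z₀ z₁ : ℤ) (h : z₀ < z₁) :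
    (∑ b : Bool, bq p b * (if z₀ ≤ u + bi b ∧ u + bi b < z₁ then (1:ℝ) else 0))
      = Af p (z₁ - u) * Bf p (z₀ - u) := by
  simp only [Fintype.sum_bool, bq, bi, Af, Bf]
  norm_num
  split_ifs <;> first | ring1 | (exfalso; omega)

lemma site_r (p : ℝ) (u₀ u₁ zz : ℤ) (h : u₀ < u₁) :
    (∑ b : Bool, bq p b * (if u₀ < zz - bi b ∧ zz - bi b ≤ u₁ then (1:ℝ) else 0))
      = Af p (zz - u₀) * Bf p (zz - u₁) := by
  simp only [Fintype.sum_bool, bq, bi, Af, Bf]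
  norm_num
  split_ifs <;> first | ring1 | (exfalso; omega)

/-! ### Indicator and sum-product manipulation -/

lemma indicator_forall {ι : Type*} [Fintype ι] {Q : Prop} [Decidable Q] (P : ι → Prop)
    [∀ i, Decidable (P i)] (h : Q ↔ ∀ i, P i) :
    (if Q then (1:ℝ) else 0) = ∏ i, if P i then (1:ℝ) else 0 := by
  by_cases hq : Q
  · rw [if_pos hq, Finset.prod_eq_one]
    intro i _; rw [if_pos ((h.1 hq) i)]
  · rw [if_neg hq]
    obtain ⟨i, hi⟩ := not_forall.1 (fun hall => hq (h.2 hall))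
    refine (Finset.prod_eq_zero (Finset.mem_univ i) ?_).symm
    exact if_neg hi

lemma sum_prod_bool {n : ℕ} (f : Fin n → Bool → ℝ) :
    ∑ ε : Fin n → Bool, ∏ i, f i (ε i) = ∏ i, ∑ b : Bool, f i b :=
  (Fintype.prod_sum (κ := fun _ : Fin n => Bool) f).symm

/-! ### The two chain factorizations -/

lemma rhs_chain (p : ℝ) (k : ℕ) (x : Fin (k + 1 + 1) → ℤ) (z : Fin (k + 1) → ℤ)
    (hx : StrictMono x) :
    ∑ δ : Fin (k + 1) → Bool, (∏ i, bq p (δ i)) *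
        (if Interlace (fun i => z i - bi (δ i)) x then 1 else 0)
      = ∏ j : Fin (k + 1), Af p (z j - x j.castSucc) * Bf p (z j - x j.succ) := by
  have key : ∀ δ : Fin (k+1) → Bool,
      (∏ i, bq p (δ i)) * (if Interlace (fun i => z i - bi (δ i)) x then (1:ℝ) else 0)
        = ∏ i, (bq p (δ i) *
            (if x i.castSucc < z i - bi (δ i) ∧ z i - bi (δ i) ≤ x i.succ then (1:ℝ) else 0)) := by
    intro δ
    rw [Finset.prod_mul_distrib]
    congr 1
    exact indicator_forall (fun i : Fin (k+1) =>
      x i.castSucc < z i - bi (δ i) ∧ z i - bi (δ i) ≤ x i.succ)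
      ⟨fun h i => h i, fun h i => h i⟩
  rw [show (∑ δ : Fin (k+1) → Bool, (∏ i, bq p (δ i)) *
        (if Interlace (fun i => z i - bi (δ i)) x then (1:ℝ) else 0))
      = ∑ δ : Fin (k+1) → Bool, ∏ i, (bq p (δ i) *
        (if x i.castSucc < z i - bi (δ i) ∧ z i - bi (δ i) ≤ x i.succ then (1:ℝ) else 0))
    from Finset.sum_congr rfl fun δ _ => key δ]
  have hswap : (∑ δ : Fin (k+1) → Bool, ∏ i, bq p (δ i) *
        (if x i.castSucc < z i - bi (δ i) ∧ z i - bi (δ i) ≤ x i.succ then (1:ℝ) else 0))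
      = ∏ i : Fin (k+1), ∑ b : Bool, bq p b *
        (if x i.castSucc < z i - bi b ∧ z i - bi b ≤ x i.succ then (1:ℝ) else 0) :=
    sum_prod_bool (fun i b => bq p b *
      (if x i.castSucc < z i - bi b ∧ z i - bi b ≤ x i.succ then (1:ℝ) else 0))
  rw [hswap]
  refine Finset.prod_congr rfl ?_
  intro j _
  exact site_r p _ _ _ (hx (Fin.castSucc_lt_succ : j.castSucc < j.succ))

lemma lhs_chain (p : ℝ) (k : ℕ) (x : Fin (k + 1 + 1) → ℤ) (z : Fin (k + 1) → ℤ)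
    (hz : StrictMono z) :
    ∑ ε : Fin (k + 1 + 1) → Bool, (∏ i, bq p (ε i)) *
        (if Interlace z (fun i => x i + bi (ε i)) then 1 else 0)
      = ∏ j : Fin (k + 1), Af p (z j - x j.castSucc) * Bf p (z j - x j.succ) := by
  set Z : ℕ → ℤ := fun t => if h : t < k+1 then z ⟨t, h⟩ else 0 with hZ
  have hZval : ∀ j : Fin (k+1), Z (j : ℕ) = z j := by
    intro j; simp only [hZ]; exact dif_pos j.isLt
  have hZmono : ∀ a b : ℕ, a < b → b < k + 1 → Z a < Z b := by
    intro a b hab hb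
    rw [hZ]; simp only [dif_pos (hab.trans hb), dif_pos hb]
    exact hz (by exact hab)
  set R : Fin (k+2) → Bool → Prop := fun i b =>
    ((i : ℕ) < k + 1 → x i + bi b < Z (i : ℕ)) ∧
    (0 < (i : ℕ) → Z ((i : ℕ) - 1) ≤ x i + bi b) with hR
  have hiff : ∀ ε : Fin (k+2) → Bool,
      Interlace z (fun i => x i + bi (ε i)) ↔ ∀ i, R i (ε i) := by
    intro ε
    constructor
    · intro h i
      refine ⟨fun hi => ?_, fun hi => ?_⟩
      · have h1 := (h ⟨(i : ℕ), hi⟩).1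
        have e : ((⟨(i : ℕ), hi⟩ : Fin (k+1)).castSucc) = i := by
          apply Fin.ext; simp
        rw [e] at h1
        rw [show Z (i:ℕ) = z ⟨(i:ℕ), hi⟩ from by simp only [hZ]; exact dif_pos hi]
        exact h1
      · have hlt : (i : ℕ) - 1 < k + 1 := by have := i.isLt; omega
        have h1 := (h ⟨(i : ℕ) - 1, hlt⟩).2
        have e : ((⟨(i : ℕ) - 1, hlt⟩ : Fin (k+1)).succ) = i := by
          apply Fin.ext; simp [Fin.val_succ]; omega
        rw [e] at h1
        rw [show Z ((i:ℕ) - 1) = z ⟨(i:ℕ) - 1, hlt⟩ from by simp only [hZ]; exact dif_pos hlt]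
        exact h1
    · intro h j
      constructor
      · have h1 := (h j.castSucc).1 (by simp only [Fin.coe_castSucc]; exact j.isLt)
        rwa [show Z ((j.castSucc : ℕ)) = z j from by
          rw [Fin.coe_castSucc, hZval]] at h1
      · have h1 := (h j.succ).2 (by simp)
        rwa [show Z ((j.succ : ℕ) - 1) = z j from by
          rw [Fin.val_succ, Nat.add_sub_cancel, hZval]] at h1
  have key : ∀ ε : Fin (k+2) → Bool,
      (∏ i, bq p (ε i)) * (if Interlace z (fun i => x i + bi (ε i)) then (1:ℝ) else 0)
        = ∏ i, (bq p (ε i) * (if R i (ε i) then (1:ℝ) else 0)) := by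
    intro ε
    rw [Finset.prod_mul_distrib]
    congr 1
    rw [if_congr (hiff ε) rfl rfl]
    exact indicator_forall (fun i => R i (ε i)) Iff.rfl
  rw [show (∑ ε : Fin (k+2) → Bool, (∏ i, bq p (ε i)) *
        (if Interlace z (fun i => x i + bi (ε i)) then (1:ℝ) else 0))
      = ∑ ε : Fin (k+2) → Bool, ∏ i, (bq p (ε i) * (if R i (ε i) then (1:ℝ) else 0))
    from Finset.sum_congr rfl fun ε _ => key ε]
  have hswap : (∑ ε : Fin (k+2) → Bool, ∏ i, bq p (ε i) * (if R i (ε i) then (1:ℝ) else 0))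
      = ∏ i : Fin (k+2), ∑ b : Bool, bq p b * (if R i b then (1:ℝ) else 0) :=
    sum_prod_bool (fun i b => bq p b * (if R i b then (1:ℝ) else 0))
  rw [hswap]
  set Ag : Fin (k+2) → ℝ := fun i => if (i : ℕ) < k + 1 then Af p (Z (i : ℕ) - x i) else 1
    with hAg
  set Bg : Fin (k+2) → ℝ := fun i => if 0 < (i : ℕ) then Bf p (Z ((i : ℕ) - 1) - x i) else 1
    with hBg
  have hsite : ∀ i : Fin (k+2), (∑ b : Bool, bq p b * (if R i b then (1:ℝ) else 0))
      = Ag i * Bg i := by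
    intro i
    by_cases hi : (i : ℕ) < k + 1 <;> by_cases h0 : 0 < (i : ℕ)
    · have hcond : ∀ b, R i b ↔ (Z ((i:ℕ) - 1) ≤ x i + bi b ∧ x i + bi b < Z (i:ℕ)) := by
        intro b
        constructor
        · intro hRb; exact ⟨hRb.2 h0, hRb.1 hi⟩
        · intro hb; exact ⟨fun _ => hb.2, fun _ => hb.1⟩
      simp_rw [if_congr (hcond _) rfl rfl]
      rw [site_mid p (x i) _ _ (hZmono _ _ (by omega) hi)]
      rw [hAg, hBg]; simp [hi, h0]
    · have hcond : ∀ b, R i b ↔ (x i + bi b < Z (i:ℕ)) := by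
        intro b
        constructor
        · intro hRb; exact hRb.1 hi
        · intro hb; exact ⟨fun _ => hb, fun hc => absurd hc h0⟩
      simp_rw [if_congr (hcond _) rfl rfl]
      rw [site_lo p (x i) _]
      rw [hAg, hBg]; simp [hi, h0]
    · have hcond : ∀ b, R i b ↔ (Z ((i:ℕ) - 1) ≤ x i + bi b) := by
        intro b
        constructor
        · intro hRb; exact hRb.2 h0
        · intro hb; exact ⟨fun hc => absurd hc hi, fun _ => hb⟩
      simp_rw [if_congr (hcond _) rfl rfl]
      rw [site_hi p (x i) _]
      rw [hAg, hBg]; simp [hi, h0]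
    · exfalso; have := i.isLt; omega
  simp_rw [hsite]
  rw [Finset.prod_mul_distrib]
  have hA : ∏ i : Fin (k+2), Ag i = ∏ j : Fin (k+1), Af p (z j - x j.castSucc) := by
    rw [Fin.prod_univ_castSucc]
    have hlast : Ag (Fin.last (k+1)) = 1 := by rw [hAg]; simp
    rw [hlast, mul_one]
    refine Finset.prod_congr rfl ?_
    intro j _
    rw [hAg]
    simp only [Fin.coe_castSucc]
    rw [if_pos j.isLt, hZval]
  have hB : ∏ i : Fin (k+2), Bg i = ∏ j : Fin (k+1), Bf p (z j - x j.succ) := by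
    rw [Fin.prod_univ_succ]
    have h0 : Bg 0 = 1 := by rw [hBg]; simp
    rw [h0, one_mul]
    refine Finset.prod_congr rfl ?_
    intro j _
    rw [hBg]
    simp only [Fin.val_succ]
    rw [if_pos (Nat.succ_pos _), Nat.add_sub_cancel, hZval]
  rw [hA, hB, ← Finset.prod_mul_distrib]

/-! ### Interlacing forces strict monotonicity -/

lemma interlace_up {k : ℕ} {z : Fin (k + 1) → ℤ} {y : Fin (k + 1 + 1) → ℤ}
    (hz : StrictMono z) (h : Interlace z y) : StrictMono y := by
  rw [Fin.strictMono_iff_lt_succ]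
  intro i
  exact lt_of_lt_of_le (h i).1 (h i).2

lemma interlace_down {k : ℕ} {w : Fin (k + 1) → ℤ} {x : Fin (k + 1 + 1) → ℤ}
    (h : Interlace w x) : StrictMono w := by
  rw [Fin.strictMono_iff_lt_succ]
  intro i
  calc w i.castSucc ≤ x i.castSucc.succ := (h i.castSucc).2
    _ = x i.succ.castSucc := by rw [Fin.succ_castSucc]
    _ < w i.succ := (h i.succ).1

/-- The intertwining relation `P_n Λⁿ_{n-1} = Λⁿ_{n-1} P_{n-1}` (here `n = m + 1 ≥ 2`):
for all `x ∈ W_n` and `z ∈ W_{n-1}`,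
`∑_{y ∈ W_n} P_n(x,y) Λⁿ_{n-1}(y,z) = ∑_{w ∈ W_{n-1}} Λⁿ_{n-1}(x,w) P_{n-1}(w,z)`. -/
theorem charlier_intertwining (m : ℕ) (hm : 1 ≤ m) (p : ℝ) (hp : 0 < p) (hp1 : p < 1)
    (x : Fin (m + 1) → ℤ) (hx : StrictMono x) (z : Fin m → ℤ) (hz : StrictMono z) :
    ∑ᶠ y ∈ {y : Fin (m + 1) → ℤ | StrictMono y}, charlierP p x y * linkKernel y z
      = ∑ᶠ w ∈ {w : Fin m → ℤ | StrictMono w}, linkKernel x w * charlierP p w z := by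
  obtain ⟨k, rfl⟩ : ∃ k, m = k + 1 := ⟨m - 1, by omega⟩
  set C : ℝ := ((k + 1).factorial : ℝ) *
      ((vandermondeProd z : ℝ) / (vandermondeProd x : ℝ)) with hC
  -- parametrizations
  set yf : (Fin (k + 1 + 1) → Bool) → (Fin (k + 1 + 1) → ℤ) := fun ε i => x i + bi (ε i)
    with hyf
  set wf : (Fin (k + 1) → Bool) → (Fin (k + 1) → ℤ) := fun δ i => z i - bi (δ i) with hwf
  -- the common evaluation of both sides
  have main :
      C * ∑ ε : Fin (k + 1 + 1) → Bool, (∏ i, bq p (ε i)) *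
          (if Interlace z (yf ε) then 1 else 0)
        = C * ∑ δ : Fin (k + 1) → Bool, (∏ i, bq p (δ i)) *
          (if Interlace (wf δ) x then 1 else 0) := by
    rw [hyf, hwf]
    rw [lhs_chain p k x z hz, rhs_chain p k x z hx]
  -- ### Left-hand side
  have hLHS : (∑ᶠ y ∈ {y : Fin (k + 1 + 1) → ℤ | StrictMono y},
        charlierP p x y * linkKernel y z)
      = C * ∑ ε : Fin (k + 1 + 1) → Bool, (∏ i, bq p (ε i)) *
          (if Interlace z (yf ε) then 1 else 0) := by
    set G : (Fin (k + 1 + 1) → ℤ) → ℝ :=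
      Set.indicator {y : Fin (k + 1 + 1) → ℤ | StrictMono y}
        (fun y => charlierP p x y * linkKernel y z) with hG
    have hGval : ∀ y, G y = if StrictMono y then charlierP p x y * linkKernel y z else 0 := by
      intro y
      rw [hG, Set.indicator_apply]
      simp [Set.mem_setOf_eq]
    have hinj : ∀ a ∈ (Finset.univ : Finset (Fin (k + 1 + 1) → Bool)),
        ∀ b ∈ (Finset.univ : Finset (Fin (k + 1 + 1) → Bool)), yf a = yf b → a = b := by
      intro a _ b _ hab
      funext i
      have := congrFun hab i
      rw [hyf] at this
      simp only at this
      rcases Bool.dichotomy (a i) with h | h <;> rcases Bool.dichotomy (b i) with h' | h' <;>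
        simp [h, h', bi] at this ⊢ <;> omega
    have hsupp : Function.support G ⊆ ↑(Finset.image yf Finset.univ) := by
      intro y hy
      rw [Function.mem_support, hGval] at hy
      by_cases hS : StrictMono y
      · rw [if_pos hS] at hy
        have hch : charlierP p x y ≠ 0 := left_ne_zero_of_mul hy
        have hdet : (Matrix.of fun i j : Fin (k + 1 + 1) => bern p (x i - y j)).det ≠ 0 :=
          right_ne_zero_of_mul hch
        rw [det_bern p hx hS] at hdet
        rw [Finset.prod_ne_zero_iff] at hdet
        have hyi : ∀ i, x i - y i = -1 ∨ x i - y i = 0 := fun i =>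
          bern_ne_zero (hdet i (Finset.mem_univ i))
        have : y = yf (fun i => decide (y i = x i + 1)) := by
          funext i
          rw [hyf]
          simp only
          by_cases hcase : y i = x i + 1
          · rw [decide_eq_true hcase]
            have := hyi i; simp [bi]; omega
          · rw [decide_eq_false hcase]
            have := hyi i; simp [bi]; omega
        rw [this]
        exact Finset.mem_coe.2 (Finset.mem_image.2 ⟨_, Finset.mem_univ _, rfl⟩)
      · rw [if_neg hS] at hy
        exact absurd rfl hy
    have step1 : (∑ᶠ y ∈ {y : Fin (k + 1 + 1) → ℤ | StrictMono y},
          charlierP p x y * linkKernel y z) = ∑ ε : Fin (k + 1 + 1) → Bool, G (yf ε) := by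
      rw [finsum_mem_def]
      rw [finsum_eq_sum_of_support_subset G hsupp]
      rw [Finset.sum_image hinj]
    rw [step1, Finset.mul_sum]
    refine Finset.sum_congr rfl ?_
    intro ε _
    rw [hGval]
    by_cases hI : Interlace z (yf ε)
    · have hS : StrictMono (yf ε) := interlace_up hz hI
      have hy0 : ((vandermondeProd (yf ε) : ℤ) : ℝ) ≠ 0 := by
        exact_mod_cast (vdm_pos hS).ne'
      rw [if_pos hS, if_pos hI, mul_one]
      unfold charlierP linkKernel
      rw [if_pos hI, det_bern p hx hS]
      have hprod : (∏ i, bern p (x i - yf ε i)) = ∏ i, bq p (ε i) := by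
        refine Finset.prod_congr rfl ?_
        intro i _
        rw [hyf]
        rcases Bool.dichotomy (ε i) with h | h <;> simp [h, bi, bern, bq]
      rw [hprod]
      have hcancel : (vandermondeProd (yf ε) : ℝ) / (vandermondeProd x : ℝ) *
          ((vandermondeProd z : ℝ) / (vandermondeProd (yf ε) : ℝ))
            = (vandermondeProd z : ℝ) / (vandermondeProd x : ℝ) := by
        rw [div_mul_div_comm, mul_comm ((vandermondeProd (yf ε) : ℤ) : ℝ)]
        exact mul_div_mul_right _ _ hy0
      calc ((vandermondeProd (yf ε) : ℝ) / (vandermondeProd x : ℝ)) * (∏ i, bq p (ε i)) *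
            (((k + 1).factorial : ℝ) *
              ((vandermondeProd z : ℝ) / (vandermondeProd (yf ε) : ℝ)) * 1)
          = ((k + 1).factorial : ℝ) *
              ((vandermondeProd (yf ε) : ℝ) / (vandermondeProd x : ℝ) *
                ((vandermondeProd z : ℝ) / (vandermondeProd (yf ε) : ℝ))) *
              (∏ i, bq p (ε i)) := by ring
        _ = C * ∏ i, bq p (ε i) := by rw [hcancel, hC]
    · rw [if_neg hI]
      by_cases hS : StrictMono (yf ε)
      · rw [if_pos hS]
        unfold linkKernel
        rw [if_neg hI]
        ring
      · rw [if_neg hS]; ring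
  -- ### Right-hand side
  have hRHS : (∑ᶠ w ∈ {w : Fin (k + 1) → ℤ | StrictMono w},
        linkKernel x w * charlierP p w z)
      = C * ∑ δ : Fin (k + 1) → Bool, (∏ i, bq p (δ i)) *
          (if Interlace (wf δ) x then 1 else 0) := by
    set G : (Fin (k + 1) → ℤ) → ℝ :=
      Set.indicator {w : Fin (k + 1) → ℤ | StrictMono w}
        (fun w => linkKernel x w * charlierP p w z) with hG
    have hGval : ∀ w, G w = if StrictMono w then linkKernel x w * charlierP p w z else 0 := by
      intro w
      rw [hG, Set.indicator_apply]
      simp [Set.mem_setOf_eq]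
    have hinj : ∀ a ∈ (Finset.univ : Finset (Fin (k + 1) → Bool)),
        ∀ b ∈ (Finset.univ : Finset (Fin (k + 1) → Bool)), wf a = wf b → a = b := by
      intro a _ b _ hab
      funext i
      have := congrFun hab i
      rw [hwf] at this
      simp only at this
      rcases Bool.dichotomy (a i) with h | h <;> rcases Bool.dichotomy (b i) with h' | h' <;>
        simp [h, h', bi] at this ⊢ <;> omega
    have hsupp : Function.support G ⊆ ↑(Finset.image wf Finset.univ) := by
      intro w hw
      rw [Function.mem_support, hGval] at hw
      by_cases hS : StrictMono w
      · rw [if_pos hS] at hw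
        have hch : charlierP p w z ≠ 0 := right_ne_zero_of_mul hw
        have hdet : (Matrix.of fun i j : Fin (k + 1) => bern p (w i - z j)).det ≠ 0 :=
          right_ne_zero_of_mul hch
        rw [det_bern p hS hz] at hdet
        rw [Finset.prod_ne_zero_iff] at hdet
        have hwi : ∀ i, w i - z i = -1 ∨ w i - z i = 0 := fun i =>
          bern_ne_zero (hdet i (Finset.mem_univ i))
        have : w = wf (fun i => decide (w i = z i - 1)) := by
          funext i
          rw [hwf]
          simp only
          by_cases hcase : w i = z i - 1
          · rw [decide_eq_true hcase]
            have := hwi i; simp [bi]; omega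
          · rw [decide_eq_false hcase]
            have := hwi i; simp [bi]; omega
        rw [this]
        exact Finset.mem_coe.2 (Finset.mem_image.2 ⟨_, Finset.mem_univ _, rfl⟩)
      · rw [if_neg hS] at hw
        exact absurd rfl hw
    have step1 : (∑ᶠ w ∈ {w : Fin (k + 1) → ℤ | StrictMono w},
          linkKernel x w * charlierP p w z) = ∑ δ : Fin (k + 1) → Bool, G (wf δ) := by
      rw [finsum_mem_def]
      rw [finsum_eq_sum_of_support_subset G hsupp]
      rw [Finset.sum_image hinj]
    rw [step1, Finset.mul_sum]
    refine Finset.sum_congr rfl ?_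
    intro δ _
    rw [hGval]
    by_cases hI : Interlace (wf δ) x
    · have hS : StrictMono (wf δ) := interlace_down hI
      have hw0 : ((vandermondeProd (wf δ) : ℤ) : ℝ) ≠ 0 := by
        exact_mod_cast (vdm_pos hS).ne'
      rw [if_pos hS]
      unfold charlierP linkKernel
      rw [if_pos hI, det_bern p hS hz]
      have hprod : (∏ i, bern p (wf δ i - z i)) = ∏ i, bq p (δ i) := by
        refine Finset.prod_congr rfl ?_
        intro i _
        rw [hwf]
        rcases Bool.dichotomy (δ i) with h | h <;> simp [h, bi, bern, bq]
      rw [hprod]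
      have hcancel : (vandermondeProd (wf δ) : ℝ) / (vandermondeProd x : ℝ) *
          ((vandermondeProd z : ℝ) / (vandermondeProd (wf δ) : ℝ))
            = (vandermondeProd z : ℝ) / (vandermondeProd x : ℝ) := by
        rw [div_mul_div_comm, mul_comm ((vandermondeProd (wf δ) : ℤ) : ℝ)]
        exact mul_div_mul_right _ _ hw0
      calc ((k + 1).factorial : ℝ) *
            ((vandermondeProd (wf δ) : ℝ) / (vandermondeProd x : ℝ)) * 1 *
            ((vandermondeProd z : ℝ) / (vandermondeProd (wf δ) : ℝ) * ∏ i, bq p (δ i))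
          = ((k + 1).factorial : ℝ) *
              ((vandermondeProd (wf δ) : ℝ) / (vandermondeProd x : ℝ) *
                ((vandermondeProd z : ℝ) / (vandermondeProd (wf δ) : ℝ))) *
              (∏ i, bq p (δ i)) := by ring
        _ = C * ((∏ i, bq p (δ i)) * 1) := by rw [hcancel, hC]; ring
    · rw [if_neg hI]
      by_cases hS : StrictMono (wf δ)
      · rw [if_pos hS]
        unfold linkKernel
        rw [if_neg hI]
        ring
      · rw [if_neg hS]; ring
  rw [hLHS, hRHS, main]
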